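/- Define polynomials p_n by p_0(x) = 1 and p_{n+1}(x) = x^2 * p_n''(x) + x*(1 - 2x) * p_n'(x) - x * p_n(x). Then for every n >= 1, p_n''(0) = 2 * (2^(2(n-1)) - 1). -/
import Mathlib


open Polynomial

/-- The Sheffer-type polynomial sequence `p₀ = 1`,
`p_{n+1}(x) = x² pₙ″(x) + x(1 - 2x) pₙ′(x) - x pₙ(x)`. -/
noncomputable def KLpoly : ℕ → Polynomial ℤ
  | 0 => 1
  | n + 1 =>
      X ^ 2 * derivative (derivative (KLpoly n)) +
        X * (1 - 2 * X) * derivative (KLpoly n) - X * KLpoly n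

lemma KL_aux2 (q : Polynomial ℤ) : (X^2*q).coeff 2 = q.coeff 0 := by
  simpa using coeff_X_pow_mul q 2 0

lemma KL_mul2 (q : Polynomial ℤ) (k : ℕ) : (q * 2).coeff k = q.coeff k * 2 := by
  rw [show (2 : Polynomial ℤ) = C 2 by norm_num, coeff_mul_C]

lemma KL_aux1 (q : Polynomial ℤ) : (X^2*q).coeff 1 = 0 := by
  rw [mul_comm, coeff_mul_X_pow']; simp

lemma KL_coeff0 (n : ℕ) : (KLpoly (n+1)).coeff 0 = 0 := by
  rw [coeff_zero_eq_eval_zero]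
  simp [KLpoly]

lemma KL_coeff1 (n : ℕ) :
    (KLpoly (n+1)).coeff 1 = (KLpoly n).coeff 1 - (KLpoly n).coeff 0 := by
  rw [show KLpoly (n+1) = X ^ 2 * derivative (derivative (KLpoly n)) +
        X * (1 - 2 * X) * derivative (KLpoly n) - X * KLpoly n from rfl,
    show X * (1 - 2 * X) = (X : Polynomial ℤ) - 2 * X ^ 2 by ring]
  simp only [coeff_derivative, sub_mul, coeff_sub, coeff_add, coeff_X_mul, KL_aux2, KL_aux1, KL_mul2,
    mul_assoc, mul_comm (2 : Polynomial ℤ)]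
  push_cast
  ring_nf

lemma KL_coeff2 (n : ℕ) :
    (KLpoly (n+1)).coeff 2 = 4 * (KLpoly n).coeff 2 - 3 * (KLpoly n).coeff 1 := by
  rw [show KLpoly (n+1) = X ^ 2 * derivative (derivative (KLpoly n)) +
        X * (1 - 2 * X) * derivative (KLpoly n) - X * KLpoly n from rfl,
    show X * (1 - 2 * X) = (X : Polynomial ℤ) - 2 * X ^ 2 by ring]
  simp only [coeff_derivative, sub_mul, coeff_sub, coeff_add, coeff_X_mul, KL_aux2, KL_aux1, KL_mul2,
    mul_assoc, mul_comm (2 : Polynomial ℤ)]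
  push_cast
  ring_nf

lemma KL_coeff1_val (n : ℕ) (hn : 1 ≤ n) : (KLpoly n).coeff 1 = -1 := by
  induction n with
  | zero => omega
  | succ m ih =>
    rcases Nat.eq_zero_or_pos m with h | h
    · subst h
      rw [KL_coeff1]
      simp [KLpoly, coeff_one]
    · rw [KL_coeff1, ih h]
      rcases Nat.exists_eq_add_of_le h with ⟨k, rfl⟩
      rw [show 1 + k = k + 1 by ring, KL_coeff0]
      ring

lemma KL_coeff2_val (n : ℕ) (hn : 1 ≤ n) : (KLpoly n).coeff 2 = 4 ^ (n - 1) - 1 := by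
  induction n with
  | zero => omega
  | succ m ih =>
    rcases Nat.eq_zero_or_pos m with h | h
    · subst h
      rw [KL_coeff2]
      simp [KLpoly, coeff_one]
    · rw [KL_coeff2, ih h, KL_coeff1_val m h]
      rcases Nat.exists_eq_add_of_le h with ⟨k, rfl⟩
      rw [show 1 + k - 1 = k from by omega, show 1 + k + 1 - 1 = k + 1 from by omega]
      ring

theorem KLpoly_second_deriv_eval_zero (n : ℕ) (hn : 1 ≤ n) :
    (derivative (derivative (KLpoly n))).eval 0 = 2 * (2 ^ (2 * (n - 1)) - 1) := by
  have h : (derivative (derivative (KLpoly n))).eval 0 = 2 * (KLpoly n).coeff 2 := by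
    rw [← coeff_zero_eq_eval_zero]
    simp [coeff_derivative]
    ring
  rw [h, KL_coeff2_val n hn, show (2 : ℤ) ^ (2 * (n - 1)) = 4 ^ (n - 1) by rw [pow_mul]; norm_num]
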